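/- arXiv:2307.02022 — 2 statements merged into one kernel-verified Lean document; each statement's English description precedes it below -/
import Mathlib

section
/- Let V be a finite linearly ordered ground set, let f : 2^V → ℝ be a submodular function, let S ⊆ V, C ⊆ S, u ∈ V \ S, and β > 0. If f_S(u) ≥ (1+β) · Σ_{c∈C} ν_f(S, c), then f((S \ C) ∪ {u}) − f(S) ≥ β · Σ_{c∈C} ν_f(S, c). In particular, f((S \ C) ∪ {u}) − f(S) ≥ f_S(u) − Σ_{c∈C} ν_f(S, c). -/
open Finset

/-- A set function is submodular. -/
def Submodular {V : Type*} [DecidableEq V] (f : Finset V → ℝ) : Prop :=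
  ∀ A B : Finset V, f (A ∪ B) + f (A ∩ B) ≤ f A + f B

/-- The incremental value `ν_f(S, e) = f(S' ∪ {e}) - f(S')` where `S' = {s ∈ S : s < e}`. -/
def incv {V : Type*} [LinearOrder V] (f : Finset V → ℝ) (S : Finset V) (e : V) : ℝ :=
  f (insert e (S.filter (fun s => s < e))) - f (S.filter (fun s => s < e))

lemma marg {V : Type*} [DecidableEq V] (f : Finset V → ℝ) (hsub : Submodular f)
    {A B : Finset V} (hAB : A ⊆ B) {e : V} (he : e ∉ B) :
    f (insert e B) - f B ≤ f (insert e A) - f A := by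
  have h := hsub (insert e A) B
  have h1 : insert e A ∪ B = insert e B := by
    ext x
    simp only [Finset.mem_union, Finset.mem_insert]
    constructor
    · rintro (( rfl | hx) | hx)
      · exact Or.inl rfl
      · exact Or.inr (hAB hx)
      · exact Or.inr hx
    · rintro (rfl | hx)
      · exact Or.inl (Or.inl rfl)
      · exact Or.inr hx
  have h2 : insert e A ∩ B = A := by
    ext x
    simp only [Finset.mem_inter, Finset.mem_insert]
    constructor
    · rintro ⟨rfl | hx, hB⟩
      · exact absurd hB he
      · exact hx
    · intro hx
      exact ⟨Or.inr hx, hAB hx⟩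
  rw [h1, h2] at h
  linarith

lemma key {V : Type*} [LinearOrder V] (f : Finset V → ℝ) (hsub : Submodular f) :
    ∀ (C S : Finset V), C ⊆ S → f S - f (S \ C) ≤ ∑ c ∈ C, incv f S c := by
  intro C
  induction C using Finset.strongInduction with
  | _ C ih =>
    intro S hCS
    rcases C.eq_empty_or_nonempty with rfl | hC
    · simp
    · set m := C.max' hC with hm
      have hmC : m ∈ C := C.max'_mem hC
      have hmS : m ∈ S := hCS hmC
      set C' := C.erase m with hC'
      have hC'lt : C' ⊂ C := Finset.erase_ssubset hmC
      have hstep : f S - f (S \ {m}) ≤ incv f S m := by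
        have hA : S.filter (fun s => s < m) ⊆ S \ {m} := by
          intro x hx
          simp only [Finset.mem_filter] at hx
          simp [Finset.mem_sdiff, hx.1, ne_of_lt hx.2]
        have hmB : m ∉ S \ {m} := by simp
        have h := marg f hsub hA hmB
        have hins : insert m (S \ {m}) = S := by
          rw [Finset.sdiff_singleton_eq_erase, Finset.insert_erase hmS]
        rw [hins] at h
        exact h
      have hsub' : C' ⊆ S \ {m} := by
        intro x hx
        simp only [Finset.mem_sdiff, Finset.mem_singleton]
        exact ⟨hCS (Finset.mem_of_mem_erase hx), Finset.ne_of_mem_erase hx⟩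
      have hIH := ih C' hC'lt (S \ {m}) hsub'
      have hset : (S \ {m}) \ C' = S \ C := by
        ext x
        simp only [Finset.mem_sdiff, Finset.mem_singleton, Finset.mem_erase, hC', not_and]
        constructor
        · rintro ⟨⟨hxS, hxm⟩, h⟩
          exact ⟨hxS, fun hxC => (h (fun h' => absurd h' hxm)) hxC⟩
        · rintro ⟨hxS, hxC⟩
          exact ⟨⟨hxS, fun h => hxC (h ▸ hmC)⟩, fun h h' => hxC h'⟩
      have hiv : ∀ c ∈ C', incv f (S \ {m}) c = incv f S c := by
        intro c hc
        have hcm : c < m :=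
          lt_of_le_of_ne (Finset.le_max' C c (Finset.mem_of_mem_erase hc))
            (Finset.ne_of_mem_erase hc)
        have hfe : (S \ {m}).filter (fun s => s < c) = S.filter (fun s => s < c) := by
          ext x
          simp only [Finset.mem_filter, Finset.mem_sdiff, Finset.mem_singleton]
          constructor
          · rintro ⟨⟨h1, _⟩, h2⟩; exact ⟨h1, h2⟩
          · rintro ⟨h1, h2⟩
            exact ⟨⟨h1, fun h => absurd h2 (by rw [h]; exact not_lt.2 hcm.le)⟩, h2⟩
        simp [incv, hfe]
      rw [hset, Finset.sum_congr rfl hiv] at hIH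
      have hsum : ∑ c ∈ C, incv f S c = incv f S m + ∑ c ∈ C', incv f S c :=
        (Finset.add_sum_erase C _ hmC).symm
      linarith

/-- Gain guarantee of a single exchange step of preemptive greedy (`deltavalue`): if
`f_S(u) ≥ (1+β) ∑_{c ∈ C} ν_f(S, c)` then
`f((S \ C) ∪ {u}) − f(S) ≥ β ∑_{c ∈ C} ν_f(S, c)`, and in particular
`f((S \ C) ∪ {u}) − f(S) ≥ f_S(u) − ∑_{c ∈ C} ν_f(S, c)`. -/
theorem exchange_gain {V : Type*} [Fintype V] [LinearOrder V]
    (f : Finset V → ℝ) (hsub : Submodular f)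
    (S C : Finset V) (hCS : C ⊆ S) (u : V) (hu : u ∉ S)
    (β : ℝ) (hβ : 0 < β)
    (hcond : (1 + β) * ∑ c ∈ C, incv f S c ≤ f (insert u S) - f S) :
    β * ∑ c ∈ C, incv f S c ≤ f ((S \ C) ∪ {u}) - f S ∧
    (f (insert u S) - f S) - ∑ c ∈ C, incv f S c ≤ f ((S \ C) ∪ {u}) - f S := by
  have h1 := key f hsub C S hCS
  have h2 : f (insert u S) - f S ≤ f (insert u (S \ C)) - f (S \ C) :=
    marg f hsub (Finset.sdiff_subset) hu
  have heq : (S \ C) ∪ {u} = insert u (S \ C) := by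
    rw [Finset.union_comm, ← Finset.insert_eq]
  rw [heq]
  constructor <;> nlinarith [hcond, h1, h2]
end

section
/- Consider a run of the preemptive greedy algorithm with parameter β > 0 on a finite simple graph G whose vertex enumeration v_1, …, v_n is an inductively k-independent ordering (k ≥ 1), with a monotone, normalized, submodular function f, producing the sets S_0, …, S_n and the set U of all elements ever added. Then for every independent set T of G, f(U ∪ T) − f(U) ≤ k (1+β)(1 + 1/β) · f(S_n). -/
open Finset

/-- A set of vertices is independent if no two of its vertices are adjacent. -/
def IsIndep {n : ℕ} (G : SimpleGraph (Fin n)) (S : Finset (Fin n)) : Prop :=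
  ∀ u ∈ S, ∀ v ∈ S, ¬ G.Adj u v

/-- `A_i`: the neighbors of `v_i` that come after `v_i` in the ordering. -/
def laterNbrs {n : ℕ} (G : SimpleGraph (Fin n)) [DecidableRel G.Adj] (i : Fin n) :
    Finset (Fin n) :=
  Finset.univ.filter (fun j => G.Adj i j ∧ i < j)

/-- `B_i`: the neighbors of `v_i` that come before `v_i` in the ordering. -/
def earlierNbrs {n : ℕ} (G : SimpleGraph (Fin n)) [DecidableRel G.Adj] (i : Fin n) :
    Finset (Fin n) :=
  Finset.univ.filter (fun j => G.Adj i j ∧ j < i)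

/-- The enumeration of `Fin n` (in its natural order) is an inductively `k`-independent
ordering of `G`. -/
def InductivelyKIndep {n : ℕ} (G : SimpleGraph (Fin n)) [DecidableRel G.Adj] (k : ℕ) : Prop :=
  ∀ i : Fin n, ∀ S ⊆ laterNbrs G i, IsIndep G S → S.card ≤ k

/-- The conflict set `C_i = N(v_i) ∩ S` of vertex `i` against the current set `S`. -/
def conflictSet {n : ℕ} (G : SimpleGraph (Fin n)) [DecidableRel G.Adj] (i : Fin n)
    (S : Finset (Fin n)) : Finset (Fin n) :=
  S.filter (fun u => G.Adj i u)

/-- Step `i` of the preemptive greedy algorithm with parameter `β` is accepted: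
`f_{S_{i-1}}(v_i) ≥ (1+β) ∑_{c ∈ C_i} ν_f(S_{i-1}, c)`, where `S_{i-1} = S i.val`. -/
def AcceptedStep {n : ℕ} (G : SimpleGraph (Fin n)) [DecidableRel G.Adj]
    (f : Finset (Fin n) → ℝ) (β : ℝ) (S : ℕ → Finset (Fin n)) (i : Fin n) : Prop :=
  (1 + β) * ∑ c ∈ conflictSet G i (S i.val), incv f (S i.val) c ≤
    f (insert i (S i.val)) - f (S i.val)

/-- `S : ℕ → Finset (Fin n)` is a run of the preemptive greedy algorithm with parameter `β`:
`S 0 = ∅`, and at each step `i` the vertex `v_i` is accepted (replacing its conflict set) iff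
its marginal value is at least `(1+β)` times the total incremental value of its conflicts. -/
def IsGreedyRun {n : ℕ} (G : SimpleGraph (Fin n)) [DecidableRel G.Adj]
    (f : Finset (Fin n) → ℝ) (β : ℝ) (S : ℕ → Finset (Fin n)) : Prop :=
  S 0 = ∅ ∧ ∀ i : Fin n,
    (AcceptedStep G f β S i →
      S (i.val + 1) = (S i.val \ conflictSet G i (S i.val)) ∪ {i}) ∧
    (¬ AcceptedStep G f β S i → S (i.val + 1) = S i.val)

/-- `U`: the set of all elements ever (even momentarily) added to the current set. -/
def everAdded {n : ℕ} (S : ℕ → Finset (Fin n)) : Finset (Fin n) :=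
  (Finset.range (n + 1)).biUnion S

section Aux

variable {n : ℕ} (f : Finset (Fin n) → ℝ)

lemma incv_eq (S : Finset (Fin n)) (e : Fin n) :
    incv f S e = f (insert e (S.filter (fun s => s < e))) - f (S.filter (fun s => s < e)) := by
  unfold incv
  congr 2

lemma marginal_mono (hsub : Submodular f) {A B : Finset (Fin n)} {e : Fin n}
    (hAB : A ⊆ B) (heB : e ∉ B) :
    f (insert e B) - f B ≤ f (insert e A) - f A := by
  have h := hsub (insert e A) B
  have h1 : insert e A ∪ B = insert e B := by
    rw [insert_union, union_eq_right.mpr hAB]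
  have h2 : insert e A ∩ B = A := by
    ext x
    simp only [mem_inter, mem_insert]
    constructor
    · rintro ⟨h | h, hB⟩
      · exact absurd (h ▸ hB) heB
      · exact h
    · intro hx; exact ⟨Or.inr hx, hAB hx⟩
  rw [h1, h2] at h
  linarith

lemma incv_nonneg (hmono : ∀ A B : Finset (Fin n), A ⊆ B → f A ≤ f B)
    (S : Finset (Fin n)) (e : Fin n) : 0 ≤ incv f S e := by
  rw [incv_eq]
  exact sub_nonneg.mpr (hmono _ _ (subset_insert _ _))

lemma sum_incv_eq (D : Finset (Fin n)) :
    ∑ c ∈ D, incv f D c = f D - f ∅ := by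
  induction D using Finset.strongInduction with
  | _ D ih =>
  rcases D.eq_empty_or_nonempty with rfl | hne
  · simp
  · set c := D.max' hne with hc
    have hcD : c ∈ D := D.max'_mem hne
    have hfilt : D.filter (fun s => s < c) = D.erase c := by
      ext x
      simp only [mem_filter, mem_erase]
      constructor
      · rintro ⟨hx, hlt⟩; exact ⟨ne_of_lt hlt, hx⟩
      · rintro ⟨hne', hx⟩; exact ⟨hx, lt_of_le_of_ne (D.le_max' x hx) hne'⟩
    have hsum := Finset.sum_erase_add D (incv f D) hcD
    have hins : insert c (D.erase c) = D := insert_erase hcD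
    have hterm : incv f D c = f D - f (D.erase c) := by
      rw [incv_eq, hfilt, hins]
    have hcongr : ∀ x ∈ D.erase c, incv f D x = incv f (D.erase c) x := by
      intro x hx
      have hxc : x ≠ c := (mem_erase.mp hx).1
      have hfeq : D.filter (fun s => s < x) = (D.erase c).filter (fun s => s < x) := by
        ext y
        simp only [mem_filter, mem_erase]
        constructor
        · rintro ⟨hy, hlt⟩
          refine ⟨⟨?_, hy⟩, hlt⟩
          rintro rfl
          exact absurd (lt_of_lt_of_le hlt (D.le_max' x (mem_erase.mp hx).2)) (lt_irrefl c)
        · rintro ⟨⟨_, hy⟩, hlt⟩; exact ⟨hy, hlt⟩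
      rw [incv_eq, incv_eq, hfeq]
    have := ih (D.erase c) (D.erase_ssubset hcD)
    rw [← hsum, Finset.sum_congr rfl hcongr, this]
    show f (D.erase c) - f ∅ + incv f D c = f D - f ∅
    rw [hterm]; ring

lemma removal_bound (hsub : Submodular f) :
    ∀ (C D : Finset (Fin n)), C ⊆ D →
      f D - f (D \ C) ≤ ∑ c ∈ C, incv f D c := by
  intro C
  induction C using Finset.strongInduction with
  | _ C ih =>
  intro D hCD
  rcases C.eq_empty_or_nonempty with rfl | hne
  · simp
  · set c := C.max' hne with hc
    have hcC : c ∈ C := C.max'_mem hne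
    have hcD : c ∈ D := hCD hcC
    have hsub1 : D.filter (fun s => s < c) ⊆ D.erase c := by
      intro x hx
      rw [mem_erase]
      exact ⟨ne_of_lt (mem_filter.mp hx).2, (mem_filter.mp hx).1⟩
    have hstep1 : f D - f (D.erase c) ≤ incv f D c := by
      have h := marginal_mono f hsub hsub1 (notMem_erase c D)
      rw [insert_erase hcD] at h
      rw [incv_eq]
      exact h
    have hCe : C.erase c ⊆ D.erase c := by
      intro x hx
      rw [mem_erase] at hx ⊢
      exact ⟨hx.1, hCD hx.2⟩
    have hrec := ih (C.erase c) (C.erase_ssubset hcC) (D.erase c) hCe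
    have hDC : D.erase c \ C.erase c = D \ C := by
      ext x
      simp only [mem_sdiff, mem_erase]
      constructor
      · rintro ⟨⟨hxc, hxD⟩, hnc⟩
        exact ⟨hxD, fun hxC => hnc ⟨hxc, hxC⟩⟩
      · rintro ⟨hxD, hxC⟩
        exact ⟨⟨fun h => hxC (h ▸ hcC), hxD⟩, fun h => hxC h.2⟩
    have hcongr : ∀ x ∈ C.erase c, incv f (D.erase c) x = incv f D x := by
      intro x hx
      have hxle : x ≤ c := C.le_max' x (mem_erase.mp hx).2
      have hfeq : (D.erase c).filter (fun s => s < x) = D.filter (fun s => s < x) := by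
        ext y
        simp only [mem_filter, mem_erase]
        constructor
        · rintro ⟨⟨_, hy⟩, hlt⟩; exact ⟨hy, hlt⟩
        · rintro ⟨hy, hlt⟩
          refine ⟨⟨?_, hy⟩, hlt⟩
          rintro rfl
          exact absurd (lt_of_lt_of_le hlt hxle) (lt_irrefl c)
      rw [incv_eq, incv_eq, hfeq]
    rw [hDC, Finset.sum_congr rfl hcongr] at hrec
    have hsum := Finset.sum_erase_add C (incv f D) hcC
    linarith

lemma add_bound (hsub : Submodular f) :
    ∀ (D U : Finset (Fin n)), Disjoint D U →
      f (U ∪ D) - f U ≤ ∑ t ∈ D, (f (insert t U) - f U) := by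
  intro D
  induction D using Finset.induction_on with
  | empty => simp
  | @insert a D' ha ih =>
    intro U hdisj
    have haU : a ∉ U := by
      have := Finset.disjoint_left.mp hdisj (mem_insert_self a D')
      exact this
    have hdisj' : Disjoint D' U := (Finset.disjoint_insert_left.mp hdisj).2
    have h1 : U ∪ insert a D' = insert a (U ∪ D') := by
      rw [union_insert]
    have h2 : a ∉ U ∪ D' := by
      rw [mem_union]
      rintro (h | h)
      · exact haU h
      · exact ha h
    have h3 := marginal_mono f hsub (subset_union_left (s₁ := U) (s₂ := D')) h2
    have h4 := ih U hdisj'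
    rw [Finset.sum_insert ha, h1]
    linarith

end Aux

section Run

variable {n : ℕ} (G : SimpleGraph (Fin n)) [DecidableRel G.Adj]
  (f : Finset (Fin n) → ℝ) (β : ℝ) (S : ℕ → Finset (Fin n))

lemma step_subset (hrun : IsGreedyRun G f β S) (i : Fin n) :
    S (i.val + 1) ⊆ insert i (S i.val) := by
  rcases Classical.em (AcceptedStep G f β S i) with hacc | hacc
  · rw [(hrun.2 i).1 hacc]
    intro x hx
    rcases mem_union.mp hx with h | h
    · exact mem_insert_of_mem (mem_sdiff.mp h).1
    · rw [mem_singleton] at h; rw [h]; exact mem_insert_self _ _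
  · rw [(hrun.2 i).2 hacc]
    exact subset_insert _ _

lemma mem_bound (hrun : IsGreedyRun G f β S) :
    ∀ m, m ≤ n → ∀ j ∈ S m, (j : ℕ) < m := by
  intro m
  induction m with
  | zero => rw [hrun.1]; simp
  | succ m ih =>
    intro hm j hj
    have hmn : m < n := hm
    have hsub := step_subset G f β S hrun ⟨m, hmn⟩
    rcases mem_insert.mp (hsub hj) with rfl | h
    · exact Nat.lt_succ_self m
    · exact lt_trans (ih (le_of_lt hmn) j h) (Nat.lt_succ_self m)

lemma context_anti (hrun : IsGreedyRun G f β S) (c : Fin n) (m : ℕ) (hcm : (c : ℕ) < m) :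
    ∀ m', m ≤ m' → m' ≤ n →
      (S m').filter (fun s => s < c) ⊆ (S m).filter (fun s => s < c) := by
  intro m'
  induction m' with
  | zero =>
    intro h1 _
    have : m = 0 := Nat.le_zero.mp h1
    rw [this]
  | succ m' ih =>
    intro hmm' hm'n
    rcases Nat.eq_or_lt_of_le hmm' with heq | hlt
    · rw [heq]
    · have h1 : m ≤ m' := by omega
      have h2 : m' < n := by omega
      refine Finset.Subset.trans ?_ (ih h1 (le_of_lt h2))
      intro x hx
      rw [mem_filter] at hx ⊢
      have hx' := step_subset G f β S hrun ⟨m', h2⟩ hx.1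
      rcases mem_insert.mp hx' with rfl | hxm
      · exfalso
        have : (m' : ℕ) < (c : ℕ) := hx.2
        omega
      · exact ⟨hxm, hx.2⟩

lemma S_subset_ever (m : ℕ) (hm : m ≤ n) : S m ⊆ everAdded S := by
  intro x hx
  exact mem_biUnion.mpr ⟨m, mem_range.mpr (by omega), hx⟩

noncomputable def lastT (S : ℕ → Finset (Fin n)) (c : Fin n) : ℕ :=
  (((Finset.range (n + 1)).filter (fun m => c ∈ S m)).max).getD 0

lemma lastT_spec (c : Fin n) (hc : c ∈ everAdded S) :
    lastT S c ≤ n ∧ c ∈ S (lastT S c) ∧ ∀ m ≤ n, c ∈ S m → m ≤ lastT S c := by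
  obtain ⟨m, hm, hcm⟩ := mem_biUnion.mp hc
  have hne : (((Finset.range (n + 1)).filter (fun m => c ∈ S m))).Nonempty :=
    ⟨m, mem_filter.mpr ⟨hm, hcm⟩⟩
  have heq : lastT S c = ((Finset.range (n + 1)).filter (fun m => c ∈ S m)).max' hne := by
    unfold lastT
    rw [← Finset.coe_max' hne]
    rfl
  have hmem := Finset.max'_mem _ hne
  rw [← heq] at hmem
  rw [mem_filter, mem_range] at hmem
  refine ⟨by omega, hmem.2, ?_⟩
  intro m' hm' hcm'
  have := Finset.le_max' ((Finset.range (n + 1)).filter (fun m => c ∈ S m)) m' (mem_filter.mpr ⟨mem_range.mpr (by omega), hcm'⟩)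
  rw [← heq] at this
  omega
end Run

noncomputable def stepPay {n : ℕ} (G : SimpleGraph (Fin n)) [DecidableRel G.Adj]
    (f : Finset (Fin n) → ℝ) (β : ℝ) (S : ℕ → Finset (Fin n)) (m : ℕ) : ℝ :=
  if h : m < n then
    haveI := Classical.propDecidable (AcceptedStep G f β S ⟨m, h⟩)
    if AcceptedStep G f β S ⟨m, h⟩ then
      ∑ c ∈ conflictSet G ⟨m, h⟩ (S m), incv f (S m) c
    else 0
  else 0

section Run2

variable {n : ℕ} (G : SimpleGraph (Fin n)) [DecidableRel G.Adj]
  (f : Finset (Fin n) → ℝ) (β : ℝ) (S : ℕ → Finset (Fin n))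

lemma stepPay_nonneg (hmono : ∀ A B : Finset (Fin n), A ⊆ B → f A ≤ f B) (m : ℕ) :
    0 ≤ stepPay G f β S m := by
  unfold stepPay
  split
  · split
    · exact Finset.sum_nonneg fun c _ => incv_nonneg f hmono _ c
    · exact le_refl 0
  · exact le_refl 0

lemma tel (hsub : Submodular f) (hnorm : f ∅ = 0) (hβ : 0 < β)
    (hrun : IsGreedyRun G f β S) :
    ∀ m, m ≤ n → β * ∑ j ∈ Finset.range m, stepPay G f β S j ≤ f (S m) := by
  intro m
  induction m with
  | zero =>
    intro _
    rw [hrun.1, hnorm]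
    simp
  | succ m ih =>
    intro hm
    have h : m < n := hm
    have ihm := ih (le_of_lt h)
    set i : Fin n := ⟨m, h⟩ with hi
    have hiv : (i : ℕ) = m := rfl
    rw [Finset.sum_range_succ]
    by_cases hacc : AcceptedStep G f β S i
    · have hS := (hrun.2 i).1 hacc
      rw [hiv] at hS
      have hpay : stepPay G f β S m = ∑ c ∈ conflictSet G i (S m), incv f (S m) c := by
        unfold stepPay
        rw [dif_pos h, if_pos hacc]
      set C := conflictSet G i (S m) with hC
      have hCsub : C ⊆ S m := filter_subset _ _
      have hrem := removal_bound f hsub C (S m) hCsub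
      have hiS : i ∉ S m := by
        intro hmem
        have := mem_bound G f β S hrun m (le_of_lt h) i hmem
        omega
      have hmarg := marginal_mono f hsub (sdiff_subset (s := S m) (t := C)) hiS
      have hacc' : (1 + β) * ∑ c ∈ C, incv f (S m) c ≤ f (insert i (S m)) - f (S m) := hacc
      have hfin : S (m + 1) = insert i (S m \ C) := by
        rw [hS]
        ext x
        simp [or_comm]
      rw [hfin, hpay]
      have hgoal : β * (∑ j ∈ Finset.range m, stepPay G f β S j + ∑ c ∈ C, incv f (S m) c)
          = β * ∑ j ∈ Finset.range m, stepPay G f β S j + β * ∑ c ∈ C, incv f (S m) c := by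
        ring
      rw [hgoal]
      nlinarith [hrem, hmarg, hacc', ihm]
    · have hS := (hrun.2 i).2 hacc
      rw [hiv] at hS
      have hpay : stepPay G f β S m = 0 := by
        unfold stepPay
        rw [dif_pos h, if_neg hacc]
      rw [hpay, hS]
      simpa using ihm

lemma sum_nustar (hsub : Submodular f)
    (hmono : ∀ A B : Finset (Fin n), A ⊆ B → f A ≤ f B) (hnorm : f ∅ = 0)
    (hβ : 0 < β) (hrun : IsGreedyRun G f β S) :
    ∑ c ∈ everAdded S, incv f (S (lastT S c)) c ≤ (1 + 1 / β) * f (S n) := by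
  have hSsub : S n ⊆ everAdded S := S_subset_ever S n (le_refl n)
  rw [← Finset.sum_sdiff hSsub]
  have hSn : ∑ c ∈ S n, incv f (S (lastT S c)) c = f (S n) := by
    rw [Finset.sum_congr rfl (fun c hc => ?_), sum_incv_eq f (S n), hnorm, sub_zero]
    have hspec := lastT_spec S c (hSsub hc)
    have : lastT S c = n := le_antisymm hspec.1 (hspec.2.2 n (le_refl n) hc)
    rw [this]
  have hmap : ∀ c ∈ everAdded S \ S n, lastT S c ∈ Finset.range n := by
    intro c hc
    rw [mem_sdiff] at hc
    have hspec := lastT_spec S c hc.1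
    rw [mem_range]
    rcases Nat.eq_or_lt_of_le hspec.1 with heq | hlt
    · exfalso
      apply hc.2
      have h' := hspec.2.1
      rw [heq] at h'
      exact h'
    · exact hlt
  have hfib := Finset.sum_fiberwise_of_maps_to hmap (fun c => incv f (S (lastT S c)) c)
  rw [← hfib]
  have hbound : ∀ m ∈ Finset.range n,
      ∑ c ∈ (everAdded S \ S n).filter (fun c => lastT S c = m),
        incv f (S (lastT S c)) c ≤ stepPay G f β S m := by
    intro m hm
    have hm' : m < n := mem_range.mp hm
    set F := (everAdded S \ S n).filter (fun c => lastT S c = m) with hF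
    have hcongr : ∀ c ∈ F, incv f (S (lastT S c)) c = incv f (S m) c := by
      intro c hc
      rw [(mem_filter.mp hc).2]
    rw [Finset.sum_congr rfl hcongr]
    rcases F.eq_empty_or_nonempty with hFe | ⟨c0, hc0⟩
    · rw [hFe]
      simpa using stepPay_nonneg G f β S hmono m
    · set i : Fin n := ⟨m, hm'⟩ with hi
      have hkey : ∀ c ∈ F, c ∈ S m ∧ c ∉ S (m + 1) := by
        intro c hc
        rw [hF, mem_filter, mem_sdiff] at hc
        obtain ⟨⟨hcU, hcSn⟩, hlast⟩ := hc
        have hspec := lastT_spec S c hcU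
        constructor
        · rw [← hlast]; exact hspec.2.1
        · intro hmem
          have := hspec.2.2 (m + 1) (by omega) hmem
          omega
      have hacc : AcceptedStep G f β S i := by
        by_contra hrej
        have hSeq := (hrun.2 i).2 hrej
        have := hkey c0 hc0
        rw [hSeq] at this
        exact this.2 this.1
      have hSeq := (hrun.2 i).1 hacc
      have hFsub : F ⊆ conflictSet G i (S m) := by
        intro c hc
        obtain ⟨hcS, hcS1⟩ := hkey c hc
        by_contra hcC
        apply hcS1
        rw [hSeq]
        exact mem_union_left _ (mem_sdiff.mpr ⟨hcS, hcC⟩)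
      have hpay : stepPay G f β S m = ∑ c ∈ conflictSet G i (S m), incv f (S m) c := by
        unfold stepPay
        rw [dif_pos hm', if_pos hacc]
      rw [hpay]
      exact Finset.sum_le_sum_of_subset_of_nonneg hFsub
        (fun c _ _ => incv_nonneg f hmono _ c)
  have htel := tel G f β S hsub hnorm hβ hrun n (le_refl n)
  have hsum := Finset.sum_le_sum hbound
  have hfs : 0 ≤ f (S n) := by
    have := hmono ∅ (S n) (empty_subset _)
    rw [hnorm] at this
    exact this
  rw [hSn]
  have h1 : ∑ m ∈ Finset.range n, stepPay G f β S m ≤ f (S n) / β := by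
    rw [le_div_iff₀ hβ]
    linarith [htel]
  have h2 : (1 + 1 / β) * f (S n) = f (S n) / β + f (S n) := by
    field_simp
    ring
  linarith [le_trans hsum h1]

end Run2

/-- Lemma `margin-against-all-taken`: for every independent set `T`,
`f(U ∪ T) − f(U) ≤ k (1+β)(1 + 1/β) f(S_n)`. -/
theorem margin_against_all_taken {n k : ℕ} (hk : 1 ≤ k)
    (G : SimpleGraph (Fin n)) [DecidableRel G.Adj]
    (hG : InductivelyKIndep G k)
    (f : Finset (Fin n) → ℝ) (hsub : Submodular f)
    (hmono : ∀ A B : Finset (Fin n), A ⊆ B → f A ≤ f B) (hnorm : f ∅ = 0)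
    (β : ℝ) (hβ : 0 < β)
    (S : ℕ → Finset (Fin n)) (hrun : IsGreedyRun G f β S)
    (T : Finset (Fin n)) (hT : IsIndep G T) :
    f (everAdded S ∪ T) - f (everAdded S) ≤ k * (1 + β) * (1 + 1 / β) * f (S n) := by
  classical
  set U := everAdded S with hU
  set ν : Fin n → ℝ := fun c => incv f (S (lastT S c)) c with hνdef
  have hν0 : ∀ c, 0 ≤ ν c := fun c => incv_nonneg f hmono _ c
  have hb : (0 : ℝ) ≤ 1 + β := by linarith
  have h1 : f (U ∪ T) - f U ≤ ∑ t ∈ T \ U, (f (insert t U) - f U) := by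
    have h := add_bound f hsub (T \ U) U sdiff_disjoint
    rwa [union_sdiff_self_eq_union] at h
  have h2 : ∀ t ∈ T \ U, f (insert t U) - f U ≤
      (1 + β) * ∑ c ∈ conflictSet G t (S t.val), ν c := by
    intro t ht
    obtain ⟨htT, htU⟩ := mem_sdiff.mp ht
    have htn : (t : ℕ) < n := t.isLt
    have hSsubU : S t.val ⊆ U := S_subset_ever S t.val (le_of_lt htn)
    have hm1 := marginal_mono f hsub hSsubU htU
    have hrej : ¬ AcceptedStep G f β S t := by
      intro hacc
      have hS := (hrun.2 t).1 hacc
      have htmem : t ∈ S (t.val + 1) := by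
        rw [hS]
        exact mem_union_right _ (mem_singleton_self t)
      exact htU (S_subset_ever S (t.val + 1) (by omega) htmem)
    have hrej' : f (insert t (S t.val)) - f (S t.val) <
        (1 + β) * ∑ c ∈ conflictSet G t (S t.val), incv f (S t.val) c := not_le.mp hrej
    have hterm : ∀ c ∈ conflictSet G t (S t.val), incv f (S t.val) c ≤ ν c := by
      intro c hcC
      rw [conflictSet, mem_filter] at hcC
      have hcS : c ∈ S t.val := hcC.1
      have hcU : c ∈ U := hSsubU hcS
      have hcv : (c : ℕ) < t.val := mem_bound G f β S hrun t.val (le_of_lt htn) c hcS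
      have hspec := lastT_spec S c hcU
      have hge : t.val ≤ lastT S c := hspec.2.2 t.val (le_of_lt htn) hcS
      have hctx := context_anti G f β S hrun c t.val hcv (lastT S c) hge hspec.1
      have hcnot : c ∉ (S t.val).filter (fun s => s < c) := by
        rw [mem_filter]
        rintro ⟨_, hlt⟩
        exact lt_irrefl c hlt
      have hmm := marginal_mono f hsub hctx hcnot
      show incv f (S t.val) c ≤ incv f (S (lastT S c)) c
      rw [incv_eq, incv_eq]
      exact hmm
    calc f (insert t U) - f U ≤ f (insert t (S t.val)) - f (S t.val) := hm1
      _ ≤ (1 + β) * ∑ c ∈ conflictSet G t (S t.val), incv f (S t.val) c := le_of_lt hrej'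
      _ ≤ (1 + β) * ∑ c ∈ conflictSet G t (S t.val), ν c :=
          mul_le_mul_of_nonneg_left (Finset.sum_le_sum hterm) hb
  have h3 : ∑ t ∈ T \ U, ∑ c ∈ conflictSet G t (S t.val), ν c ≤ (k : ℝ) * ∑ c ∈ U, ν c := by
    have hconfU : ∀ t : Fin n, conflictSet G t (S t.val) ⊆ U := fun t =>
      Finset.Subset.trans (filter_subset _ _) (S_subset_ever S t.val (le_of_lt t.isLt))
    have hrw : ∀ t ∈ T \ U, ∑ c ∈ conflictSet G t (S t.val), ν c
        = ∑ c ∈ U, if c ∈ conflictSet G t (S t.val) then ν c else 0 := by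
      intro t _
      rw [Finset.sum_ite_mem, inter_eq_right.mpr (hconfU t)]
    rw [Finset.sum_congr rfl hrw, Finset.sum_comm, Finset.mul_sum]
    apply Finset.sum_le_sum
    intro c hcU
    rw [← Finset.sum_filter]
    set Q := (T \ U).filter (fun t => c ∈ conflictSet G t (S t.val)) with hQ
    rw [Finset.sum_const, nsmul_eq_mul]
    have hQsub : Q ⊆ laterNbrs G c := by
      intro t htQ
      rw [hQ, mem_filter] at htQ
      obtain ⟨htTU, htC⟩ := htQ
      rw [conflictSet, mem_filter] at htC
      have hcv : (c : ℕ) < t.val := mem_bound G f β S hrun t.val (le_of_lt t.isLt) c htC.1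
      rw [laterNbrs, mem_filter]
      exact ⟨mem_univ _, htC.2.symm, Fin.lt_def.mpr hcv⟩
    have hQind : IsIndep G Q := by
      intro u hu v hv
      have hu' : u ∈ T := (mem_sdiff.mp (mem_filter.mp hu).1).1
      have hv' : v ∈ T := (mem_sdiff.mp (mem_filter.mp hv).1).1
      exact hT u hu' v hv'
    have hcard : (Q.card : ℝ) ≤ (k : ℝ) := Nat.cast_le.mpr (hG c Q hQsub hQind)
    exact mul_le_mul_of_nonneg_right hcard (hν0 c)
  have h4 : ∑ c ∈ U, ν c ≤ (1 + 1 / β) * f (S n) :=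
    sum_nustar G f β S hsub hmono hnorm hβ hrun
  have hch : f (U ∪ T) - f U ≤ (1 + β) * ∑ t ∈ T \ U, ∑ c ∈ conflictSet G t (S t.val), ν c := by
    rw [Finset.mul_sum]
    exact le_trans h1 (Finset.sum_le_sum h2)
  have hkpos : (0 : ℝ) ≤ (k : ℝ) := Nat.cast_nonneg k
  calc f (U ∪ T) - f U
      ≤ (1 + β) * ((k : ℝ) * ∑ c ∈ U, ν c) :=
        le_trans hch (mul_le_mul_of_nonneg_left h3 hb)
    _ ≤ (1 + β) * ((k : ℝ) * ((1 + 1 / β) * f (S n))) :=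
        mul_le_mul_of_nonneg_left (mul_le_mul_of_nonneg_left h4 hkpos) hb
    _ = k * (1 + β) * (1 + 1 / β) * f (S n) := by ring
end
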